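/- The complex 3-dimensional algebra A₃₀ with basis e₁, e₂, e₃ and nonzero products e₁·e₁ = e₁, e₂·e₃ = e₃, e₃·e₂ = −e₃ (all other basis products zero) is a noncommutative Jordan algebra: it satisfies the flexible identity (xy)x = x(yx) and the Jordan identity ((xx)y)x = (xx)(yx) for all x, y, and it is neither commutative nor anticommutative. -/

import Mathlib

/-- The algebra A₃₀ : e₁e₁ = e₁, e₂e₃ = e₃, e₃e₂ = −e₃. -/
def mulA30 (x y : Fin 3 → ℂ) : Fin 3 → ℂ :=
  ![x 0 * y 0, 0, x 1 * y 2 - x 2 * y 1]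

theorem stmt_7 :
    (∀ x y : Fin 3 → ℂ, mulA30 (mulA30 x y) x = mulA30 x (mulA30 y x)) ∧
    (∀ x y : Fin 3 → ℂ,
      mulA30 (mulA30 (mulA30 x x) y) x = mulA30 (mulA30 x x) (mulA30 y x)) ∧
    ¬ (∀ x y : Fin 3 → ℂ, mulA30 x y = mulA30 y x) ∧
    ¬ (∀ x y : Fin 3 → ℂ, mulA30 x y = - mulA30 y x) := by
  refine ⟨?_, ?_, ?_, ?_⟩
  · intro x y
    funext i
    fin_cases i <;> simp [mulA30] <;> ring_nf <;> tauto
  · intro x y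
    funext i
    fin_cases i <;> simp [mulA30] <;> ring_nf <;> tauto
  · intro h
    have := congrFun (h ![0,1,0] ![0,0,1]) 2
    norm_num [mulA30, Matrix.cons_val_two, Matrix.vecHead, Matrix.vecTail] at this
  · intro h
    have := congrFun (h ![1,0,0] ![1,0,0]) 0
    norm_num [mulA30] at this
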